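/- Let u : ℝ → ℝⁿ lie on an integral curve C of a smooth vector field r satisfying ∇r(u)·r(u) = 0 for all u ∈ C, i.e. u(ρ) with du/dρ = r(u(ρ)). If ρ = ρ(x,t) solves ρ_t = a² ρ_{xx}, then U(x,t) := u(ρ(x,t)) satisfies U_t = a² U_{xx}. -/

import Mathlib

/-- the contact-wave profile `U(x,t) = u(ρ(x,t))` solves the linear
heat equation under the structural condition `∇r·r ≡ 0` on the integral curve. -/
theorem contact_wave_solves_heat_equation
    (n : ℕ) (a : ℝ) (ha : 0 < a)
    (r : EuclideanSpace ℝ (Fin n) → EuclideanSpace ℝ (Fin n)) (hr : ContDiff ℝ 1 r)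
    (u : ℝ → EuclideanSpace ℝ (Fin n))
    -- u is an integral curve of the vector field r
    (hu : ∀ p : ℝ, HasDerivAt u (r (u p)) p)
    -- structural condition ∇r·r = 0 along the curve
    (hstruct : ∀ p : ℝ, fderiv ℝ r (u p) (r (u p)) = 0)
    (ρ : ℝ → ℝ → ℝ)
    (hρx : ∀ t, ContDiff ℝ 2 (fun x => ρ x t))
    (hρt : ∀ x, Differentiable ℝ (fun t => ρ x t))
    -- ρ solves the heat equation ρ_t = a² ρ_xx
    (hheat : ∀ x t, deriv (fun τ => ρ x τ) t
        = a ^ 2 * deriv (fun ξ => deriv (fun ζ => ρ ζ t) ξ) x) :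
    ∀ x t, deriv (fun τ => u (ρ x τ)) t
      = a ^ 2 • deriv (fun ξ => deriv (fun ζ => u (ρ ζ t)) ξ) x := by
  intro x t
  have hrd : Differentiable ℝ r := hr.differentiable one_ne_zero
  set g : ℝ → ℝ := fun ξ => ρ ξ t with hgdef
  have hg2 : ContDiff ℝ 2 g := hρx t
  have hgd : Differentiable ℝ g := hg2.differentiable (by norm_num)
  have hg'c : ContDiff ℝ 1 (deriv g) := by
    have := (contDiff_succ_iff_deriv.mp (show ContDiff ℝ (1+1) g from hg2)).2.2
    exact this
  have hg'd : Differentiable ℝ (deriv g) := hg'c.differentiable one_ne_zero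
  -- first spatial derivative
  have key : ∀ ξ : ℝ, HasDerivAt (fun ζ => u (g ζ)) (deriv g ξ • r (u (g ξ))) ξ :=
    fun ξ => (hu (g ξ)).scomp ξ (hgd ξ).hasDerivAt
  have hderiv_eq : (fun ξ => deriv (fun ζ => u (ρ ζ t)) ξ)
      = fun ξ => deriv g ξ • r (u (g ξ)) := funext fun ξ => (key ξ).deriv
  -- derivative of r ∘ u ∘ g
  have h2 : HasDerivAt (fun ξ => r (u (g ξ))) 0 x := by
    have := (hrd (u (g x))).hasFDerivAt.comp_hasDerivAt x (key x)
    have h0 : fderiv ℝ r (u (g x)) (deriv g x • r (u (g x))) = 0 := by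
      rw [map_smul, hstruct (g x), smul_zero]
    rw [h0] at this
    exact this
  -- second spatial derivative
  have hxx : HasDerivAt (fun ξ => deriv g ξ • r (u (g ξ)))
      (deriv (deriv g) x • r (u (g x))) x := by
    have := ((hg'd x).hasDerivAt).smul h2
    simp only [smul_zero, zero_add, add_zero] at this
    exact this
  -- time derivative
  have ht : HasDerivAt (fun τ => u (ρ x τ)) (deriv (fun τ => ρ x τ) t • r (u (ρ x t))) t :=
    (hu (ρ x t)).scomp t (hρt x t).hasDerivAt
  rw [ht.deriv, hderiv_eq, hxx.deriv, hheat x t]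
  have : deriv (fun ξ => deriv (fun ζ => ρ ζ t) ξ) x = deriv (deriv g) x := rfl
  rw [this, mul_smul]
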